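/- Let A be the quotient of the free k-algebra on two generators Z, X by the two-sided ideal generated by Z^{2n+1} − Z, ZX − q·XZ, and X², and let H be the quotient of the free k-algebra on two generators z, x by the two-sided ideal generated by z^{2n} − 1, zx − q·xz, and x². Then J := Z^{2n} is a central idempotent of A, and A is isomorphic as a k-algebra to the product ring H × k[y]/(y²). -/

import Mathlib

open FreeAlgebra

variable (k : Type*) [Field k]

/-- The relations defining `A = 𝔴H₄ₙ = k⟨Z,X⟩/(Z^{2n+1} - Z, ZX - q·XZ, X²)`. -/
inductive wRel (n : ℕ) (q : k) : FreeAlgebra k (Fin 2) → FreeAlgebra k (Fin 2) → Prop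
  | r1 : wRel n q (ι k 0 ^ (2 * n + 1)) (ι k 0)
  | r2 : wRel n q (ι k 0 * ι k 1) (q • (ι k 1 * ι k 0))
  | r3 : wRel n q (ι k 1 ^ 2) 0

/-- The relations defining `H = H₄ₙ = k⟨z,x⟩/(z^{2n} - 1, zx - q·xz, x²)`. -/
inductive hRel (n : ℕ) (q : k) : FreeAlgebra k (Fin 2) → FreeAlgebra k (Fin 2) → Prop
  | r1 : hRel n q (ι k 0 ^ (2 * n)) 1
  | r2 : hRel n q (ι k 0 * ι k 1) (q • (ι k 1 * ι k 0))
  | r3 : hRel n q (ι k 1 ^ 2) 0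

namespace Stmt9Aux

variable {k} (n : ℕ) (q : k)

noncomputable abbrev Z : RingQuot (wRel k n q) := RingQuot.mkAlgHom k (wRel k n q) (ι k 0)
noncomputable abbrev X : RingQuot (wRel k n q) := RingQuot.mkAlgHom k (wRel k n q) (ι k 1)
noncomputable abbrev e : RingQuot (wRel k n q) := Z n q ^ (2 * n)

lemma hZpow : Z n q ^ (2 * n + 1) = Z n q := by
  have := RingQuot.mkAlgHom_rel k (wRel.r1 (k := k) (n := n) (q := q))
  simpa using this

lemma hZX : Z n q * X n q = q • (X n q * Z n q) := by
  have := RingQuot.mkAlgHom_rel k (wRel.r2 (k := k) (n := n) (q := q))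
  simpa using this

lemma hXX : X n q * X n q = 0 := by
  have := RingQuot.mkAlgHom_rel k (wRel.r3 (k := k) (n := n) (q := q))
  simpa [sq] using this

lemma hZmX : ∀ m : ℕ, Z n q ^ m * X n q = q ^ m • (X n q * Z n q ^ m) := by
  intro m
  induction m with
  | zero => simp
  | succ m ih =>
    calc Z n q ^ (m + 1) * X n q = Z n q ^ m * (Z n q * X n q) := by
          rw [pow_succ, mul_assoc]
      _ = Z n q ^ m * (q • (X n q * Z n q)) := by rw [hZX]
      _ = q • (Z n q ^ m * X n q * Z n q) := by
          rw [mul_smul_comm, mul_assoc]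
      _ = q • ((q ^ m • (X n q * Z n q ^ m)) * Z n q) := by rw [ih]
      _ = q ^ (m + 1) • (X n q * Z n q ^ (m + 1)) := by
          rw [smul_mul_assoc, smul_smul, pow_succ, pow_succ, mul_assoc]
          rw [mul_comm q (q ^ m)]

lemma hee (hn : 1 ≤ n) : e n q * e n q = e n q := by
  have h : 2 * n + 2 * n = (2 * n - 1) + (2 * n + 1) := by omega
  calc e n q * e n q = Z n q ^ (2 * n - 1) * Z n q ^ (2 * n + 1) := by
        rw [e, ← pow_add, ← pow_add, ← h]
    _ = Z n q ^ (2 * n - 1) * Z n q := by rw [hZpow]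
    _ = Z n q ^ (2 * n) := by rw [← pow_succ]; congr 1; omega

lemma heX (hq1 : q ^ (2 * n) = 1) : e n q * X n q = X n q * e n q := by
  rw [e, hZmX, hq1, one_smul]

lemma heZ : e n q * Z n q = Z n q * e n q := by
  rw [e, ← pow_succ, ← pow_succ']

lemma hZe : Z n q * e n q = Z n q := by
  rw [e, ← pow_succ', hZpow]

lemma heZ' : e n q * Z n q = Z n q := by rw [heZ, hZe]

lemma hcentral (hq1 : q ^ (2 * n) = 1) :
    ∀ u : RingQuot (wRel k n q), e n q * u = u * e n q := by
  intro u
  obtain ⟨a, rfl⟩ := RingQuot.mkAlgHom_surjective k (wRel k n q) u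
  induction a using FreeAlgebra.induction with
  | grade0 c =>
    rw [AlgHom.commutes]
    exact (Algebra.commutes c (e n q)).symm
  | grade1 i =>
    fin_cases i
    · exact heZ n q
    · exact heX n q hq1
  | mul a b ha hb =>
    rw [map_mul, ← mul_assoc, ha, mul_assoc, hb, mul_assoc]
  | add a b ha hb =>
    rw [map_add, mul_add, add_mul, ha, hb]

/-- `c = 1 - e`, the complementary idempotent. -/
noncomputable abbrev ce : RingQuot (wRel k n q) := 1 - e n q

lemma hcc (hn : 1 ≤ n) : ce n q * ce n q = ce n q := by
  rw [ce, mul_sub, sub_mul, sub_mul, one_mul, mul_one, hee n q hn]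
  simp

lemma hec (hn : 1 ≤ n) : e n q * ce n q = 0 := by
  rw [ce, mul_sub, mul_one, hee n q hn, sub_self]

lemma hce (hn : 1 ≤ n) : ce n q * e n q = 0 := by
  rw [ce, sub_mul, one_mul, hee n q hn, sub_self]

lemma hcZ : ce n q * Z n q = 0 := by
  rw [ce, sub_mul, one_mul, heZ', sub_self]

lemma hZc : Z n q * ce n q = 0 := by
  rw [ce, mul_sub, mul_one, hZe, sub_self]

/-- `w = Z + (1 - e)`, the invertible lift of `z`. -/
noncomputable abbrev w : RingQuot (wRel k n q) := Z n q + ce n q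

lemma hw_pow (hn : 1 ≤ n) : ∀ m : ℕ, 1 ≤ m → w n q ^ m = Z n q ^ m + ce n q := by
  intro m
  induction m with
  | zero => omega
  | succ m ih =>
    intro _
    rcases Nat.eq_or_lt_of_le (Nat.zero_le m) with h | h
    · simp [← h, w]
    · have hm : 1 ≤ m := h
      have hZmc : Z n q ^ m * ce n q = 0 := by
        have : Z n q ^ m = Z n q ^ (m - 1) * Z n q := by
          rw [← pow_succ]; congr 1; omega
        rw [this, mul_assoc, hZc, mul_zero]
      rw [pow_succ, ih hm, w, mul_add, add_mul, add_mul, hZmc, hcZ, hcc n q hn,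
        ← pow_succ]
      simp

lemma hw2n (hn : 1 ≤ n) : w n q ^ (2 * n) = 1 := by
  rw [hw_pow n q hn (2 * n) (by omega), ce, e, add_sub_cancel]

noncomputable abbrev z : RingQuot (hRel k n q) := RingQuot.mkAlgHom k (hRel k n q) (ι k 0)
noncomputable abbrev x : RingQuot (hRel k n q) := RingQuot.mkAlgHom k (hRel k n q) (ι k 1)

lemma hzpow : z n q ^ (2 * n) = 1 := by
  have := RingQuot.mkAlgHom_rel k (hRel.r1 (k := k) (n := n) (q := q))
  simpa using this

lemma hzx : z n q * x n q = q • (x n q * z n q) := by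
  have := RingQuot.mkAlgHom_rel k (hRel.r2 (k := k) (n := n) (q := q))
  simpa using this

lemma hxx : x n q * x n q = 0 := by
  have := RingQuot.mkAlgHom_rel k (hRel.r3 (k := k) (n := n) (q := q))
  simpa [sq] using this

/-- k[y]/(y²) -/
abbrev Qk (k : Type*) [Field k] :=
  Polynomial k ⧸ Ideal.span {(Polynomial.X : Polynomial k) ^ 2}

noncomputable abbrev y : Qk k := Ideal.Quotient.mk _ (Polynomial.X : Polynomial k)

lemma hyy : (y : Qk k) * y = 0 := by
  rw [y, ← map_mul, ← sq, Ideal.Quotient.eq_zero_iff_mem]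
  exact Ideal.subset_span rfl

/-- The map `φ : A → H × k[y]/(y²)`, `Z ↦ (z,0)`, `X ↦ (x,y)`. -/
noncomputable def φ : RingQuot (wRel k n q) →ₐ[k] (RingQuot (hRel k n q) × Qk k) :=
  RingQuot.liftAlgHom k
    ⟨FreeAlgebra.lift k ![(z n q, 0), (x n q, y)], by
      rintro a b (_ | _ | _)
      · simp only [map_pow, FreeAlgebra.lift_ι_apply]
        show ((z n q, (0 : Qk k)) : _ × _) ^ (2 * n + 1) = (z n q, 0)
        rw [Prod.pow_def]
        refine Prod.ext ?_ (by simp)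
        simp only []
        rw [pow_succ, hzpow, one_mul]
      · simp only [map_mul, map_smul, FreeAlgebra.lift_ι_apply]
        show ((z n q, (0:Qk k)) * (x n q, y)) = q • ((x n q, y) * (z n q, 0))
        rw [Prod.mk_mul_mk, Prod.mk_mul_mk, Prod.smul_mk, hzx]
        simp
      · simp only [map_pow, map_zero, FreeAlgebra.lift_ι_apply]
        show ((x n q, (y : Qk k)) : _ × _) ^ 2 = 0
        rw [sq, Prod.mk_mul_mk, hxx, hyy]
        rfl⟩

lemma φZ : φ n q (Z n q) = (z n q, 0) := by
  rw [φ, Z, RingQuot.liftAlgHom_mkAlgHom_apply, FreeAlgebra.lift_ι_apply]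
  rfl

lemma φX : φ n q (X n q) = (x n q, y) := by
  rw [φ, X, RingQuot.liftAlgHom_mkAlgHom_apply, FreeAlgebra.lift_ι_apply]
  rfl

lemma φe (hn : 1 ≤ n) : φ n q (e n q) = (1, 0) := by
  rw [e, map_pow, φZ, Prod.pow_def]
  refine Prod.ext ?_ (zero_pow (by omega : 2 * n ≠ 0))
  simpa using hzpow n q

lemma hcX (hq1 : q ^ (2 * n) = 1) : ce n q * X n q = X n q * ce n q := by
  rw [ce, sub_mul, mul_sub, one_mul, mul_one, heX n q hq1]

/-- The map `f : H → A`, `z ↦ Z + (1-e)`, `x ↦ e·X`. -/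
noncomputable def f (hn : 1 ≤ n) (hq1 : q ^ (2 * n) = 1) :
    RingQuot (hRel k n q) →ₐ[k] RingQuot (wRel k n q) :=
  RingQuot.liftAlgHom k
    ⟨FreeAlgebra.lift k ![w n q, e n q * X n q], by
      rintro a b (_ | _ | _)
      · simp only [map_pow, map_one, FreeAlgebra.lift_ι_apply]
        show w n q ^ (2 * n) = 1
        exact hw2n n q hn
      · simp only [map_mul, map_smul, FreeAlgebra.lift_ι_apply]
        show w n q * (e n q * X n q) = q • (e n q * X n q * w n q)
        have lhs : w n q * (e n q * X n q) = Z n q * X n q := by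
          rw [w, add_mul, ← mul_assoc, ← mul_assoc, hZe, hce n q hn, zero_mul,
            add_zero]
        have rhs : e n q * X n q * w n q = X n q * Z n q := by
          rw [w, mul_add, heX n q hq1, mul_assoc, mul_assoc, hec n q hn,
            mul_zero, add_zero, heZ']
        rw [lhs, rhs, hZX]
      · simp only [map_pow, map_zero, FreeAlgebra.lift_ι_apply]
        show (e n q * X n q) ^ 2 = 0
        rw [sq, mul_assoc, ← mul_assoc (X n q), ← heX n q hq1, ← mul_assoc,
          ← mul_assoc, hee n q hn, mul_assoc, hXX, mul_zero]⟩

lemma fz (hn : 1 ≤ n) (hq1 : q ^ (2 * n) = 1) : f n q hn hq1 (z n q) = w n q := by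
  rw [f, z, RingQuot.liftAlgHom_mkAlgHom_apply, FreeAlgebra.lift_ι_apply]
  rfl

lemma fx (hn : 1 ≤ n) (hq1 : q ^ (2 * n) = 1) :
    f n q hn hq1 (x n q) = e n q * X n q := by
  rw [f, x, RingQuot.liftAlgHom_mkAlgHom_apply, FreeAlgebra.lift_ι_apply]
  rfl

/-- The map `g : k[y]/(y²) → A`, `y ↦ (1-e)·X`. -/
noncomputable def g (hn : 1 ≤ n) (hq1 : q ^ (2 * n) = 1) :
    Qk k →ₐ[k] RingQuot (wRel k n q) :=
  Ideal.Quotient.liftₐ _ (Polynomial.aeval (ce n q * X n q)) (by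
    intro a ha
    rw [Ideal.mem_span_singleton] at ha
    obtain ⟨c, rfl⟩ := ha
    have h0 : (ce n q * X n q) ^ 2 = 0 := by
      rw [sq, mul_assoc, ← mul_assoc (X n q), ← hcX n q hq1, ← mul_assoc,
        ← mul_assoc, hcc n q hn, mul_assoc, hXX, mul_zero]
    rw [map_mul, map_pow, Polynomial.aeval_X, h0, zero_mul])

lemma gy (hn : 1 ≤ n) (hq1 : q ^ (2 * n) = 1) :
    g n q hn hq1 y = ce n q * X n q := by
  simp [g, y, Ideal.Quotient.liftₐ_apply]
  exact (Ideal.Quotient.lift_mk _ _ _).trans (Polynomial.aeval_X _)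

lemma hcentral_c (hq1 : q ^ (2 * n) = 1) (u : RingQuot (wRel k n q)) :
    ce n q * u = u * ce n q := by
  rw [ce, sub_mul, mul_sub, one_mul, mul_one, hcentral n q hq1 u]

lemma key_ee (hn : 1 ≤ n) (hq1 : q ^ (2 * n) = 1) (u v : RingQuot (wRel k n q)) :
    (u * e n q) * (v * e n q) = (u * v) * e n q := by
  rw [mul_assoc, ← mul_assoc (e n q), hcentral n q hq1 v, mul_assoc,
    hee n q hn, ← mul_assoc]

lemma key_ec (hn : 1 ≤ n) (hq1 : q ^ (2 * n) = 1) (u v : RingQuot (wRel k n q)) :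
    (u * e n q) * (v * ce n q) = 0 := by
  rw [mul_assoc, ← mul_assoc (e n q), hcentral n q hq1 v, mul_assoc,
    hec n q hn, mul_zero, mul_zero]

lemma key_ce (hn : 1 ≤ n) (hq1 : q ^ (2 * n) = 1) (u v : RingQuot (wRel k n q)) :
    (u * ce n q) * (v * e n q) = 0 := by
  rw [mul_assoc, ← mul_assoc (ce n q), hcentral_c n q hq1 v, mul_assoc,
    hce n q hn, mul_zero, mul_zero]

lemma key_cc (hn : 1 ≤ n) (hq1 : q ^ (2 * n) = 1) (u v : RingQuot (wRel k n q)) :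
    (u * ce n q) * (v * ce n q) = (u * v) * ce n q := by
  rw [mul_assoc, ← mul_assoc (ce n q), hcentral_c n q hq1 v, mul_assoc,
    hcc n q hn, ← mul_assoc]

/-- The inverse map `ψ : H × k[y]/(y²) → A`. -/
noncomputable def ψ (hn : 1 ≤ n) (hq1 : q ^ (2 * n) = 1) :
    (RingQuot (hRel k n q) × Qk k) →ₐ[k] RingQuot (wRel k n q) where
  toFun p := f n q hn hq1 p.1 * e n q + g n q hn hq1 p.2 * ce n q
  map_one' := by
    simp only [Prod.fst_one, Prod.snd_one, map_one, one_mul]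
    exact add_sub_cancel _ _
  map_mul' p p' := by
    simp only [Prod.fst_mul, Prod.snd_mul, map_mul]
    rw [add_mul, mul_add, mul_add, key_ee n q hn hq1, key_ec n q hn hq1,
      key_ce n q hn hq1, key_cc n q hn hq1, add_zero, zero_add]
  map_zero' := by simp
  map_add' p p' := by
    simp only [Prod.fst_add, Prod.snd_add, map_add, add_mul]
    abel
  commutes' c := by
    have h1 : (algebraMap k (RingQuot (hRel k n q) × Qk k) c).1
        = algebraMap k _ c := rfl
    have h2 : (algebraMap k (RingQuot (hRel k n q) × Qk k) c).2
        = algebraMap k _ c := rfl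
    show f n q hn hq1 (algebraMap k (RingQuot (hRel k n q) × Qk k) c).1 * e n q
        + g n q hn hq1 (algebraMap k (RingQuot (hRel k n q) × Qk k) c).2 * ce n q
        = algebraMap k _ c
    rw [h1, h2, AlgHom.commutes, AlgHom.commutes, ← mul_add, add_sub_cancel,
      mul_one]

lemma ψ_apply (hn : 1 ≤ n) (hq1 : q ^ (2 * n) = 1) (p : RingQuot (hRel k n q) × Qk k) :
    ψ n q hn hq1 p = f n q hn hq1 p.1 * e n q + g n q hn hq1 p.2 * ce n q := rfl

lemma ψφZ (hn : 1 ≤ n) (hq1 : q ^ (2 * n) = 1) :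
    ψ n q hn hq1 (φ n q (Z n q)) = Z n q := by
  rw [φZ, ψ_apply]
  dsimp only
  rw [fz, map_zero, zero_mul, add_zero, w, add_mul, hZe, hce n q hn, add_zero]

lemma ψφX (hn : 1 ≤ n) (hq1 : q ^ (2 * n) = 1) :
    ψ n q hn hq1 (φ n q (X n q)) = X n q := by
  rw [φX, ψ_apply]
  dsimp only
  rw [fx, gy, mul_assoc, ← heX n q hq1, ← mul_assoc, hee n q hn,
    mul_assoc, ← hcX n q hq1, ← mul_assoc, hcc n q hn, ← add_mul,
    add_sub_cancel, one_mul]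

lemma comp1 (hn : 1 ≤ n) (hq1 : q ^ (2 * n) = 1) :
    (ψ n q hn hq1).comp (φ n q) = AlgHom.id k (RingQuot (wRel k n q)) := by
  apply RingQuot.ringQuot_ext'
  apply FreeAlgebra.hom_ext
  funext i
  fin_cases i
  · exact ψφZ n q hn hq1
  · exact ψφX n q hn hq1

lemma φce (hn : 1 ≤ n) : φ n q (ce n q) = (0, 1) := by
  rw [ce, map_sub, map_one, φe n q hn]
  exact Prod.ext (by simp) (by simp)

lemma θ_id (hn : 1 ≤ n) (hq1 : q ^ (2 * n) = 1) :
    (AlgHom.fst k (RingQuot (hRel k n q)) (Qk k)).comp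
        ((φ n q).comp (f n q hn hq1)) = AlgHom.id k (RingQuot (hRel k n q)) := by
  apply RingQuot.ringQuot_ext'
  apply FreeAlgebra.hom_ext
  funext i
  fin_cases i
  · show (φ n q (f n q hn hq1 (z n q))).1 = z n q
    rw [fz, w, map_add, φZ, φce n q hn, Prod.fst_add]
    simp
  · show (φ n q (f n q hn hq1 (x n q))).1 = x n q
    rw [fx, map_mul, φe n q hn, φX, Prod.mk_mul_mk]
    simp

lemma θ'_id (hn : 1 ≤ n) (hq1 : q ^ (2 * n) = 1) :
    (AlgHom.snd k (RingQuot (hRel k n q)) (Qk k)).comp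
        ((φ n q).comp (g n q hn hq1)) = AlgHom.id k (Qk k) := by
  apply Ideal.Quotient.algHom_ext
  apply Polynomial.algHom_ext
  show (φ n q (g n q hn hq1 y)).2 = y
  rw [gy, map_mul, φce n q hn, φX, Prod.mk_mul_mk]
  simp

lemma prod_mul_e {R S : Type*} [Monoid R] [MulZeroOneClass S] (p : R × S) :
    p * (1, 0) = (p.1, 0) := by
  ext
  · simp
  · simp

lemma prod_mul_c {R S : Type*} [MulZeroOneClass R] [Monoid S] (p : R × S) :
    p * (0, 1) = (0, p.2) := by
  ext
  · simp
  · simp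

lemma right_inv (hn : 1 ≤ n) (hq1 : q ^ (2 * n) = 1)
    (p : RingQuot (hRel k n q) × Qk k) : φ n q (ψ n q hn hq1 p) = p := by
  rw [ψ_apply, map_add, map_mul, map_mul, φe n q hn, φce n q hn,
    prod_mul_e, prod_mul_c]
  have h1 : (φ n q (f n q hn hq1 p.1)).1 = p.1 := by
    have := AlgHom.congr_fun (θ_id n q hn hq1) p.1
    simpa only [AlgHom.comp_apply, AlgHom.id_apply, AlgHom.fst_apply] using this
  have h2 : (φ n q (g n q hn hq1 p.2)).2 = p.2 := by
    have := AlgHom.congr_fun (θ'_id n q hn hq1) p.2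
    simpa only [AlgHom.comp_apply, AlgHom.id_apply, AlgHom.snd_apply] using this
  rw [h1, h2]
  ext
  · simp
  · simp

end Stmt9Aux

/-- `J = Z^{2n}` is a central idempotent of `A = 𝔴H₄ₙ`, and `A` is
isomorphic as a `k`-algebra to `H₄ₙ × k[y]/(y²)`. -/
theorem stmt_9 {k : Type*} [Field k] [CharZero k] [IsAlgClosed k]
    (n : ℕ) (hn : 1 ≤ n) (q : k) (hq : IsPrimitiveRoot q (2 * n)) :
    (RingQuot.mkAlgHom k (wRel k n q) (ι k 0) ^ (2 * n)) *
        (RingQuot.mkAlgHom k (wRel k n q) (ι k 0) ^ (2 * n))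
      = RingQuot.mkAlgHom k (wRel k n q) (ι k 0) ^ (2 * n) ∧
    (∀ u : RingQuot (wRel k n q),
      (RingQuot.mkAlgHom k (wRel k n q) (ι k 0) ^ (2 * n)) * u
        = u * (RingQuot.mkAlgHom k (wRel k n q) (ι k 0) ^ (2 * n))) ∧
    Nonempty (RingQuot (wRel k n q) ≃ₐ[k]
      (RingQuot (hRel k n q) ×
        (Polynomial k ⧸ Ideal.span {(Polynomial.X : Polynomial k) ^ 2}))) := by
  have hq1 : q ^ (2 * n) = 1 := hq.pow_eq_one
  refine ⟨Stmt9Aux.hee n q hn, Stmt9Aux.hcentral n q hq1,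
    ⟨AlgEquiv.ofBijective (Stmt9Aux.φ n q) ⟨?_, ?_⟩⟩⟩
  · exact Function.LeftInverse.injective
      (g := Stmt9Aux.ψ n q hn hq1)
      (fun a => AlgHom.congr_fun (Stmt9Aux.comp1 n q hn hq1) a)
  · exact Function.RightInverse.surjective (Stmt9Aux.right_inv n q hn hq1)
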